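/- For all natural numbers n, the sum over k from 0 to n of C(n+k,k) * C(2n-k, n) * (1 + (n - 2k)*(H_k - H_{n+k})) equals C(2n+1, n). -/

import Mathlib

open Finset

def harmonicQ (m : Nat) : ℚ := ∑ j ∈ Finset.range m, (1 : ℚ) / (j + 1)

lemma harmonicQ_succ (m : ℕ) : harmonicQ (m + 1) = harmonicQ m + 1 / (m + 1) := by
  simp [harmonicQ, Finset.sum_range_succ]

/-- Telescoping certificate. -/
def ggQ (n k : ℕ) : ℚ :=
  ((n + k).choose k : ℚ) * ((2 * n - k).choose n : ℚ) *
    ((k : ℚ) - (2 * n + 1) + (k : ℚ) * (2 * n + 1 - (k : ℚ)) *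
      (harmonicQ k - harmonicQ (n + k))) / (n + 1)

lemma stepQ (n k : ℕ) (hk : k ≤ n) :
    ((n + k).choose k : ℚ) * ((2 * n - k).choose n : ℚ) *
        (1 + ((n : ℚ) - 2 * k) * (harmonicQ k - harmonicQ (n + k)))
      = ggQ n (k + 1) - ggQ n k := by
  rcases eq_or_lt_of_le hk with rfl | hkn
  · -- boundary case k = n
    have h0 : ggQ k (k + 1) = 0 := by
      rcases Nat.eq_zero_or_pos k with rfl | hpos
      · norm_num [ggQ, harmonicQ]
      · have hz : (2 * k - (k + 1)).choose k = 0 :=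
          Nat.choose_eq_zero_of_lt (by omega)
        simp [ggQ, hz]
    rw [h0, zero_sub]
    simp only [ggQ]
    rw [show 2 * k - k = k by omega]
    rw [Nat.choose_self]
    have hk1 : ((k : ℚ) + 1) ≠ 0 := by positivity
    field_simp
    ring
  · -- main case k < n
    have e1 : n + (k + 1) = (n + k) + 1 := rfl
    simp only [ggQ, e1, harmonicQ_succ]
    set A : ℚ := ((n + k).choose k : ℚ) with hA
    set A2 : ℚ := ((n + k + 1).choose (k + 1) : ℚ) with hA2
    set B : ℚ := ((2 * n - k).choose n : ℚ) with hB
    set B2 : ℚ := ((2 * n - (k + 1)).choose n : ℚ) with hB2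
    have ha' : A2 * ((k : ℚ) + 1) = A * ((n : ℚ) + k + 1) := by
      have h := Nat.add_one_mul_choose_eq (n + k) k
      have h' := congrArg (Nat.cast (R := ℚ)) h
      push_cast at h'
      rw [hA, hA2]
      linarith
    have hbnat : (2 * n - (k + 1)).choose n * (2 * n - k)
        = (2 * n - k).choose n * (n - k) := by
      have h1 : 2 * n - (k + 1) + 1 = 2 * n - k := by omega
      have h2 : 2 * n - k - n = n - k := by omega
      have h3 := Nat.choose_mul_succ_eq (2 * n - (k + 1)) n
      rw [h1, h2] at h3
      exact h3
    have hb' : B2 * (2 * (n : ℚ) - k) = B * ((n : ℚ) - k) := by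
      have h := congrArg (Nat.cast (R := ℚ)) hbnat
      push_cast [Nat.cast_sub (show k ≤ 2 * n by omega),
        Nat.cast_sub (show k ≤ n from le_of_lt hkn)] at h
      rw [hB, hB2]
      linarith
    have hkq : (k : ℚ) < n := by exact_mod_cast hkn
    have hk0 : (0 : ℚ) ≤ k := by positivity
    have hk1 : ((k : ℚ) + 1) ≠ 0 := by positivity
    have hn1 : ((n : ℚ) + 1) ≠ 0 := by positivity
    have hnk1 : ((n : ℚ) + k + 1) ≠ 0 := by positivity
    have h2nk : (2 * (n : ℚ) - k) ≠ 0 := by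
      have : (0 : ℚ) < 2 * (n : ℚ) - k := by linarith
      exact this.ne'
    have hA2' : A2 = A * ((n : ℚ) + k + 1) / ((k : ℚ) + 1) := by
      rw [eq_div_iff hk1]; exact ha'
    have hB2' : B2 = B * ((n : ℚ) - k) / (2 * (n : ℚ) - k) := by
      rw [eq_div_iff h2nk]; exact hb'
    rw [hA2', hB2']
    push_cast
    generalize hD : (2 * (n : ℚ) - k) = D at h2nk ⊢
    field_simp
    rw [← hD]
    ring

theorem stmt14 (n : ℕ) :
    ∑ k ∈ range (n + 1), ((n + k).choose k : ℚ) * ((2 * n - k).choose n : ℚ) *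
        (1 + ((n : ℚ) - 2 * k) * (harmonicQ k - harmonicQ (n + k)))
      = ((2 * n + 1).choose n : ℚ) := by
  have tel := Finset.sum_range_sub (ggQ n) (n + 1)
  have hsum : ∑ k ∈ range (n + 1), ((n + k).choose k : ℚ) * ((2 * n - k).choose n : ℚ) *
      (1 + ((n : ℚ) - 2 * k) * (harmonicQ k - harmonicQ (n + k)))
      = ggQ n (n + 1) - ggQ n 0 := by
    rw [← tel]
    refine Finset.sum_congr rfl fun k hk => ?_
    exact stepQ n k (Nat.lt_succ_iff.mp (Finset.mem_range.mp hk))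
  rw [hsum]
  have hzero : ggQ n (n + 1) = 0 := by
    rcases Nat.eq_zero_or_pos n with rfl | hpos
    · norm_num [ggQ, harmonicQ]
    · have hz : (2 * n - (n + 1)).choose n = 0 :=
        Nat.choose_eq_zero_of_lt (by omega)
      simp [ggQ, hz]
  rw [hzero, zero_sub]
  have hnat : (2 * n + 1) * (2 * n).choose n = (2 * n + 1).choose n * (n + 1) := by
    have h1 := Nat.add_one_mul_choose_eq (2 * n) n
    have h2 : (2 * n + 1).choose (n + 1) = (2 * n + 1).choose n := by
      have h3 := Nat.choose_symm (show n + 1 ≤ 2 * n + 1 by omega)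
      rw [show 2 * n + 1 - (n + 1) = n by omega] at h3
      exact h3.symm
    rw [h2] at h1
    exact h1
  simp only [ggQ, Nat.add_zero, Nat.choose_zero_right, Nat.sub_zero, Nat.cast_zero,
    Nat.cast_one, harmonicQ]
  have hq := congrArg (Nat.cast (R := ℚ)) hnat
  push_cast at hq
  have hn1 : ((n : ℚ) + 1) ≠ 0 := by positivity
  field_simp
  linarith [hq]
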